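/- Let T > 0, let H : ℝ × ℝ^n × ℝ^n × ℝ^m → ℝ be continuous, let x, p : [0,T] → ℝ^n be continuous, and let c_1, …, c_K ∈ ℝ^m be fixed vectors. Then for every ε > 0 there exists δ > 0 such that for every a ∈ [0,T], every Δ ∈ (0, δ] with a + Δ ≤ T, every chattering measure α, and every measurable u : [a, a+Δ] → ℝ^m for which there exist pairwise disjoint measurable sets A_1, …, A_K covering [a, a+Δ] with Lebesgue measure μ(A_k) = α_k Δ and u(t) = c_k for t ∈ A_k, one has |∫_a^{a+Δ} H(t, x(t), p(t), u(t)) dt − Δ · Σ_{k=1}^K α_k H(a, x(a), p(a), c_k)| ≤ ε Δ. -/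

import Mathlib

open MeasureTheory Set

/-- Chattering approximation of the Hamiltonian integral (Theorem 1, made
quantitative): for continuous `H` and continuous trajectories `x`, `p` on
`[0,T]`, and fixed levels `c k`, for every `ε > 0` there is `δ > 0` such that
for every subinterval `[a, a+Δ] ⊆ [0,T]` with `0 < Δ ≤ δ`, every chattering
measure `α`, and every measurable chattering control `u` with levels `c k`
and measure `α` on `[a, a+Δ]`,
`|∫_a^{a+Δ} H(t,x(t),p(t),u(t)) dt − Δ·∑ k, α k · H(a,x(a),p(a),c k)| ≤ ε·Δ`. -/
theorem hamiltonian_chattering_approx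
    (n m K : ℕ) (T : ℝ) (hT : 0 < T)
    (H : ℝ × EuclideanSpace ℝ (Fin n) × EuclideanSpace ℝ (Fin n) ×
          EuclideanSpace ℝ (Fin m) → ℝ)
    (hH : Continuous H)
    (x p : ℝ → EuclideanSpace ℝ (Fin n))
    (hx : ContinuousOn x (Icc 0 T)) (hp : ContinuousOn p (Icc 0 T))
    (c : Fin K → EuclideanSpace ℝ (Fin m)) :
    ∀ ε > (0 : ℝ), ∃ δ > (0 : ℝ),
      ∀ a ∈ Icc (0 : ℝ) T, ∀ Δ : ℝ, 0 < Δ → Δ ≤ δ → a + Δ ≤ T →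
      ∀ α : Fin K → ℝ, (∀ k, 0 ≤ α k) → (∑ k, α k = 1) →
      ∀ u : ℝ → EuclideanSpace ℝ (Fin m), Measurable u →
      ∀ A : Fin K → Set ℝ,
        (∀ k, MeasurableSet (A k)) →
        (∀ i j, i ≠ j → Disjoint (A i) (A j)) →
        (∀ k, A k ⊆ Icc a (a + Δ)) →
        (Icc a (a + Δ) ⊆ ⋃ k, A k) →
        (∀ k, volume (A k) = ENNReal.ofReal (α k * Δ)) →
        (∀ k, ∀ t ∈ A k, u t = c k) →
        |(∫ t in a..(a + Δ), H (t, x t, p t, u t)) -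
            Δ * ∑ k, α k * H (a, x a, p a, c k)| ≤ ε * Δ := by
  intro ε hε
  -- the "frozen control" Hamiltonians
  set g : Fin K → ℝ → ℝ := fun k t => H (t, x t, p t, c k) with hg
  have hgcont : ∀ k, ContinuousOn (g k) (Icc 0 T) := by
    intro k
    exact hH.comp_continuousOn
      (continuousOn_id.prodMk (hx.prodMk (hp.prodMk continuousOn_const)))
  -- uniform continuity of each `g k` on the compact `Icc 0 T`
  have huc : ∀ k : Fin K, ∃ δ > (0 : ℝ), ∀ s ∈ Icc (0:ℝ) T, ∀ t ∈ Icc (0:ℝ) T,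
      dist s t ≤ δ → dist (g k s) (g k t) ≤ ε := by
    intro k
    have := (isCompact_Icc.uniformContinuousOn_of_continuous (hgcont k))
    rw [Metric.uniformContinuousOn_iff_le] at this
    obtain ⟨δ, hδ, hδ'⟩ := this ε hε
    exact ⟨δ / 2, by linarith, fun s hs t ht h =>
      hδ' s hs t ht (h.trans (by linarith))⟩
  choose δf hδfpos hδf using huc
  -- a common `δ`
  obtain ⟨δ, hδpos, hδle⟩ : ∃ δ > (0 : ℝ), ∀ k : Fin K, δ ≤ δf k := by
    rcases isEmpty_or_nonempty (Fin K) with h | h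
    · exact ⟨1, one_pos, fun k => isEmptyElim k⟩
    · refine ⟨Finset.univ.inf' Finset.univ_nonempty δf, ?_, fun k => ?_⟩
      · exact (Finset.lt_inf'_iff _).2 fun k _ => hδfpos k
      · exact Finset.inf'_le _ (Finset.mem_univ k)
  refine ⟨δ, hδpos, ?_⟩
  intro a ha Δ hΔ hΔδ haΔ α hα hαsum u hu A hAm hAd hAsub hAcover hAvol hAu
  have ha0 : (0:ℝ) ≤ a := ha.1
  have hIccsub : Icc a (a + Δ) ⊆ Icc 0 T := fun t ht =>
    ⟨le_trans ha0 ht.1, le_trans ht.2 haΔ⟩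
  have hAsub' : ∀ k, A k ⊆ Icc 0 T := fun k => (hAsub k).trans hIccsub
  have haT : a ∈ Icc (0:ℝ) T := ha
  -- the integrand
  set f : ℝ → ℝ := fun t => H (t, x t, p t, u t) with hf
  -- integrability of `g k` on each `A k`
  have hgint : ∀ k, IntegrableOn (g k) (A k) := by
    intro k
    exact ((hgcont k).integrableOn_compact isCompact_Icc).mono_set (hAsub' k)
  -- `f = g k` on `A k`
  have hfg : ∀ k, EqOn f (g k) (A k) := by
    intro k t ht
    simp only [hf, hg, hAu k t ht]
  -- integrability of `f` on each `A k` and the union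
  have hfint : ∀ k, IntegrableOn f (A k) := fun k =>
    (integrableOn_congr_fun (hfg k) (hAm k)).2 (hgint k)
  have hfintU : IntegrableOn f (⋃ k, A k) :=
    integrableOn_finite_iUnion.2 hfint
  have hUnion : Icc a (a + Δ) = ⋃ k, A k :=
    Subset.antisymm hAcover (iUnion_subset hAsub)
  -- rewrite the interval integral as a sum over the pieces
  have hsplit : (∫ t in a..(a + Δ), f t) = ∑ k, ∫ t in A k, f t := by
    rw [intervalIntegral.integral_of_le (by linarith),
      ← integral_Icc_eq_integral_Ioc, hUnion,
      integral_iUnion hAm (fun i j hij => hAd i j hij) hfintU, tsum_fintype]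
  -- each piece integral of `f` equals that of `g k`
  have hpiece : ∀ k, (∫ t in A k, f t) = ∫ t in A k, g k t := fun k =>
    setIntegral_congr_fun (hAm k) (hfg k)
  -- volume facts
  have hvolR : ∀ k, (volume (A k)).toReal = α k * Δ := by
    intro k
    rw [hAvol k, ENNReal.toReal_ofReal (mul_nonneg (hα k) hΔ.le)]
  have hvolfin : ∀ k, volume (A k) < ⊤ := by
    intro k; rw [hAvol k]; exact ENNReal.ofReal_lt_top
  -- the constant part
  have hconst : Δ * ∑ k, α k * g k a = ∑ k, ∫ _ in A k, g k a := by
    rw [Finset.mul_sum]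
    refine Finset.sum_congr rfl fun k _ => ?_
    rw [setIntegral_const, measureReal_def, hvolR k, smul_eq_mul]
    ring
  -- bound each piece
  have hbound : ∀ k, |(∫ t in A k, g k t) - ∫ _ in A k, g k a| ≤ ε * (α k * Δ) := by
    intro k
    rw [← integral_sub (hgint k) (integrableOn_const (hvolfin k).ne)]
    have := MeasureTheory.norm_setIntegral_le_of_norm_le_const (hvolfin k)
      (C := ε) (f := fun t => g k t - g k a) ?_
    · rw [Real.norm_eq_abs] at this
      calc |∫ t in A k, (g k t - g k a)| ≤ ε * (volume (A k)).toReal := this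
        _ = ε * (α k * Δ) := by rw [hvolR k]
    · intro t ht
      have ht' : t ∈ Icc a (a + Δ) := hAsub k ht
      have hdist : dist t a ≤ δf k := by
        rw [Real.dist_eq]
        have : |t - a| ≤ Δ := by
          rw [abs_le]; constructor <;> [linarith [ht'.1]; linarith [ht'.2]]
        exact this.trans (hΔδ.trans (hδle k))
      have := hδf k t (hIccsub ht') a haT hdist
      rwa [Real.dist_eq, ← Real.norm_eq_abs] at this
  -- put everything together
  calc |(∫ t in a..(a + Δ), f t) - Δ * ∑ k, α k * g k a|
      = |∑ k, ((∫ t in A k, g k t) - ∫ _ in A k, g k a)| := by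
        rw [hsplit, hconst, ← Finset.sum_sub_distrib]
        congr 1
        exact Finset.sum_congr rfl fun k _ => by rw [hpiece k]
    _ ≤ ∑ k, |(∫ t in A k, g k t) - ∫ _ in A k, g k a| :=
        Finset.abs_sum_le_sum_abs _ _
    _ ≤ ∑ k, ε * (α k * Δ) := Finset.sum_le_sum fun k _ => hbound k
    _ = ε * Δ := by
        rw [← Finset.mul_sum]
        have : ∑ k, α k * Δ = Δ := by
          rw [← Finset.sum_mul, hαsum, one_mul]
        rw [this]
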